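/- In ℙ𝕊², every open neighborhood of the class z₀₀ = [((0,∞),(0,∞))] of the lattice point ((0,∞),(0,∞)) contains the class [((0,s),(0,t))] for all s, t ∈ (0,∞) and also the class [((1,s),(1,t))] for all s, t ∈ (0,∞). -/

import Mathlib

open scoped ENNReal Topology
open Set Filter

/-- The parameter space `𝕊 = {0} ∪ (ℕ₀ × (0,∞])`, realized as a subtype of the
lexicographic product `ℕ ×ₗ ℝ≥0∞`: the pair `(0,0)` represents `0 ∈ 𝕊`, and the pairs
`(i,t)` with `t > 0` represent the elements of `ℕ₀ × (0,∞]`.  The induced subtype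
order is exactly the order of the paper: `0` is the least element, and
`(i,t) < (j,s)` iff `i < j`, or `i = j` and `t < s`. -/
abbrev Sp : Type :=
  {p : ℕ ×ₗ ℝ≥0∞ // ((ofLex p).1 = 0 ∧ (ofLex p).2 = 0) ∨ 0 < (ofLex p).2}

/-- The zero element of `𝕊`. -/
def sZero : Sp := ⟨toLex (0, 0), Or.inl ⟨rfl, rfl⟩⟩

/-- The element `(i,t)` of `𝕊`, for a level `i ∈ ℕ₀` and real part `t ∈ (0,∞]`. -/
def sNode (i : ℕ) (t : ℝ≥0∞) (ht : 0 < t) : Sp := ⟨toLex (i, t), Or.inr ht⟩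

/-- The level `ℒ(x)` of an element of `𝕊` (conventionally `0` on the zero element). -/
def sLevel (x : Sp) : ℕ := (ofLex x.val).1

/-- The real part `ℛ(x)` of an element of `𝕊` (equal to `0` exactly on the zero element). -/
def sRe (x : Sp) : ℝ≥0∞ := (ofLex x.val).2

theorem sNode_ne_sZero {i : ℕ} {t : ℝ≥0∞} (ht : 0 < t) : sNode i t ht ≠ sZero :=
  fun h => ht.ne' (congrArg sRe h)

/-- Scalar multiplication by an extended real `λ`: `λ·(i,t) = (i, λ·t)` and `λ·0 = 0`
(intended for positive scalars `λ ∈ (0,∞]`). -/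
noncomputable def sSMul (l : ℝ≥0∞) (x : Sp) : Sp :=
  if hx : sRe x = 0 then sZero
  else if hl : l = 0 then sZero
  else sNode (sLevel x) (l * sRe x) (ENNReal.mul_pos hl hx)

/-- `𝕊` carries the order topology. -/
instance : TopologicalSpace Sp := Preorder.topology Sp

instance : OrderTopology Sp := ⟨rfl⟩

/-- `𝕊² ∖ {(0,0)}`. -/
abbrev SV2 : Type := {v : Sp × Sp // v ≠ (sZero, sZero)}

/-- Projective equivalence on `𝕊² ∖ {(0,0)}`: `w = λ·v` coordinatewise for some real
`λ ∈ (0,∞)` (i.e. some positive finite extended real). -/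
def projRel2 (v w : SV2) : Prop :=
  ∃ l : ℝ≥0∞, 0 < l ∧ l ≠ ∞ ∧
    w.val.1 = sSMul l v.val.1 ∧ w.val.2 = sSMul l v.val.2

/-- The projectivization `ℙ𝕊²`, with the quotient topology. -/
abbrev PS2 : Type := Quot projRel2

/-- The point `((i,s),(j,t))` of `𝕊² ∖ {(0,0)}`. -/
def pt2 (i j : ℕ) (s t : ℝ≥0∞) (hs : 0 < s) (ht : 0 < t) : SV2 :=
  ⟨(sNode i s hs, sNode j t ht), fun h => sNode_ne_sZero hs (congrArg Prod.fst h)⟩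

/-- The lattice point `((0,∞),(0,∞)) ∈ 𝕊²`. -/
noncomputable def z00 : SV2 := pt2 0 0 ∞ ∞ (by simp) (by simp)


lemma sp_lt_iff (x y : Sp) :
    x < y ↔ sLevel x < sLevel y ∨ sLevel x = sLevel y ∧ sRe x < sRe y := by
  rw [← Subtype.coe_lt_coe]
  exact Prod.Lex.lt_iff

lemma sSMul_node {l : ℝ≥0∞} (hl : l ≠ 0) (i : ℕ) (t : ℝ≥0∞) (ht : 0 < t) :
    sSMul l (sNode i t ht) = sNode i (l * t) (ENNReal.mul_pos hl ht.ne') := by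
  simp [sSMul, sRe, sNode, sLevel, ht.ne', hl]

/-- In `ℙ𝕊²`, every open neighborhood of the class `z₀₀ = [((0,∞),(0,∞))]` contains
the class `[((0,s),(0,t))]` for all `s, t ∈ (0,∞)` and the class `[((1,s),(1,t))]`
for all `s, t ∈ (0,∞)`. -/
theorem stmt14 (U : Set PS2) (hU : IsOpen U) (hz : Quot.mk projRel2 z00 ∈ U) :
    (∀ s t : ℝ≥0∞, ∀ hs : 0 < s, s ≠ ∞ → ∀ ht : 0 < t, t ≠ ∞ →
      Quot.mk projRel2 (pt2 0 0 s t hs ht) ∈ U) ∧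
    (∀ s t : ℝ≥0∞, ∀ hs : 0 < s, s ≠ ∞ → ∀ ht : 0 < t, t ≠ ∞ →
      Quot.mk projRel2 (pt2 1 1 s t hs ht) ∈ U) := by
  classical
  have hVopen : IsOpen (Quot.mk projRel2 ⁻¹' U) := hU.preimage continuous_quot_mk
  obtain ⟨W, hWopen, hWeq⟩ := isOpen_induced_iff.mp hVopen
  have hzW : z00.val ∈ W := by
    have : z00 ∈ Subtype.val ⁻¹' W := by rw [hWeq]; exact hz
    exact this
  have ha : (0:ℝ≥0∞) < ∞ := by simp
  set a : Sp := sNode 0 ∞ ha with ha_def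
  have hWnhds : W ∈ 𝓝 ((a, a) : Sp × Sp) := hWopen.mem_nhds hzW
  obtain ⟨W1, hW1, W2, hW2, hWsub⟩ := mem_nhds_prod_iff.mp hWnhds
  have hlt0 : ∃ l : Sp, l < a := ⟨sZero, by
    rw [sp_lt_iff]; exact Or.inr ⟨rfl, by simp [sRe, sZero, a, sNode]⟩⟩
  have hgt0 : ∃ u : Sp, a < u := ⟨sNode 1 1 one_pos, by
    rw [sp_lt_iff]; exact Or.inl (by norm_num [sLevel, sNode, a])⟩
  obtain ⟨l1, u1, hmem1, hsub1⟩ := (mem_nhds_iff_exists_Ioo_subset' hlt0 hgt0).mp hW1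
  obtain ⟨l2, u2, hmem2, hsub2⟩ := (mem_nhds_iff_exists_Ioo_subset' hlt0 hgt0).mp hW2
  have hal : sLevel a = 0 := rfl
  have har : sRe a = ∞ := rfl
  -- facts about l1, l2
  have hlfacts : ∀ l : Sp, l < a → sLevel l = 0 ∧ sRe l < ∞ := by
    intro l hl
    rcases (sp_lt_iff l a).mp hl with h | ⟨h1, h2⟩
    · exact absurd (hal ▸ h) (Nat.not_lt_zero _)
    · exact ⟨hal ▸ h1, har ▸ h2⟩
  obtain ⟨hl1lev, hl1re⟩ := hlfacts l1 hmem1.1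
  obtain ⟨hl2lev, hl2re⟩ := hlfacts l2 hmem2.1
  have hufacts : ∀ u : Sp, a < u → 1 ≤ sLevel u := by
    intro u hu
    rcases (sp_lt_iff a u).mp hu with h | ⟨h1, h2⟩
    · omega
    · exact absurd (har ▸ h2) (not_top_lt)
  have hu1lev := hufacts u1 hmem1.2
  have hu2lev := hufacts u2 hmem2.2
  -- generic closing step
  have key : ∀ (i : ℕ) (s t : ℝ≥0∞) (hs : 0 < s) (ht : 0 < t) (l : ℝ≥0∞)
      (hl0 : l ≠ 0) (hltop : l ≠ ∞),
      sNode i (l * s) (ENNReal.mul_pos hl0 hs.ne') ∈ Set.Ioo l1 u1 →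
      sNode i (l * t) (ENNReal.mul_pos hl0 ht.ne') ∈ Set.Ioo l2 u2 →
      Quot.mk projRel2 (pt2 i i s t hs ht) ∈ U := by
    intro i s t hs ht l hl0 hltop h1 h2
    set w : SV2 := ⟨(sNode i (l * s) (ENNReal.mul_pos hl0 hs.ne'),
      sNode i (l * t) (ENNReal.mul_pos hl0 ht.ne')),
      fun h => sNode_ne_sZero (ENNReal.mul_pos hl0 hs.ne') (congrArg Prod.fst h)⟩ with hw
    have hrel : projRel2 (pt2 i i s t hs ht) w :=
      ⟨l, pos_iff_ne_zero.mpr hl0, hltop, (sSMul_node hl0 i s hs).symm,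
        (sSMul_node hl0 i t ht).symm⟩
    have hwW : w.val ∈ W := hWsub (Set.mk_mem_prod (hsub1 h1) (hsub2 h2))
    have hwU : Quot.mk projRel2 w ∈ U := by
      have : w ∈ Subtype.val ⁻¹' W := hwW
      rw [hWeq] at this; exact this
    rw [Quot.sound hrel]; exact hwU
  constructor
  · -- level 0 part: scale up
    intro s t hs hstop ht httop
    set M : ℝ≥0∞ := max (sRe l1) (sRe l2) with hM
    have hMtop : M ≠ ∞ := by
      simp only [hM, ne_eq, max_eq_top, not_or]; exact ⟨hl1re.ne, hl2re.ne⟩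
    set m : ℝ≥0∞ := min s t with hm
    have hm0 : m ≠ 0 := (lt_min hs ht).ne'
    have hmtop : m ≠ ∞ := by simp [hm, hstop, httop]
    set l : ℝ≥0∞ := (M + 1) * m⁻¹ with hl
    have hM1 : M + 1 ≠ 0 := by simp
    have hl0 : l ≠ 0 := mul_ne_zero hM1 (ENNReal.inv_ne_zero.mpr hmtop)
    have hltop : l ≠ ∞ :=
      ENNReal.mul_ne_top (ENNReal.add_ne_top.mpr ⟨hMtop, ENNReal.one_ne_top⟩)
        (ENNReal.inv_ne_top.mpr hm0)
    have hkey : ∀ x : ℝ≥0∞, m ≤ x → M < l * x := by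
      intro x hx
      have h1 : l * m = M + 1 := by
        rw [hl, mul_assoc, ENNReal.inv_mul_cancel hm0 hmtop, mul_one]
      calc M < M + 1 := ENNReal.lt_add_right hMtop one_ne_zero
        _ = l * m := h1.symm
        _ ≤ l * x := mul_le_mul_right hx l
    have hgs : sRe l1 < l * s := lt_of_le_of_lt (le_max_left _ _) (hkey s (min_le_left _ _))
    have hgt : sRe l2 < l * t := lt_of_le_of_lt (le_max_right _ _) (hkey t (min_le_right _ _))
    refine key 0 s t hs ht l hl0 hltop ⟨?_, ?_⟩ ⟨?_, ?_⟩
    · rw [sp_lt_iff]; exact Or.inr ⟨hl1lev, hgs⟩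
    · rw [sp_lt_iff]; refine Or.inl ?_; show (0:ℕ) < sLevel u1; omega
    · rw [sp_lt_iff]; exact Or.inr ⟨hl2lev, hgt⟩
    · rw [sp_lt_iff]; refine Or.inl ?_; show (0:ℕ) < sLevel u2; omega
  · -- level 1 part: scale down
    intro s t hs hstop ht httop
    set B1 : ℝ≥0∞ := if sLevel u1 = 1 then sRe u1 else ∞ with hB1
    set B2 : ℝ≥0∞ := if sLevel u2 = 1 then sRe u2 else ∞ with hB2
    have hBpos : ∀ (u : Sp), (if sLevel u = 1 then sRe u else ∞) ≠ 0 := by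
      intro u
      split
      · next h =>
        rcases u.2 with ⟨h1, _⟩ | h2
        · have h1' : sLevel u = 0 := h1
          omega
        · exact h2.ne'
      · simp
    set c : ℝ≥0∞ := min (min B1 B2) 1 with hc
    have hc0 : c ≠ 0 :=
      (lt_min (lt_min (pos_iff_ne_zero.mpr (hBpos u1)) (pos_iff_ne_zero.mpr (hBpos u2)))
        one_pos).ne'
    have hctop : c ≠ ∞ := by
      refine ne_top_of_le_ne_top ENNReal.one_ne_top (min_le_right _ _)
    set mx : ℝ≥0∞ := max s t with hmx
    have hmx0 : mx ≠ 0 := by simp [hmx, hs.ne']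
    have hmxtop : mx ≠ ∞ := by simp [hmx, hstop, httop]
    set l : ℝ≥0∞ := (c / 2) * mx⁻¹ with hl
    have hc2 : c / 2 ≠ 0 := by
      simp [ENNReal.div_eq_zero_iff, hc0]
    have hl0 : l ≠ 0 := mul_ne_zero hc2 (ENNReal.inv_ne_zero.mpr hmxtop)
    have hltop : l ≠ ∞ :=
      ENNReal.mul_ne_top (ENNReal.div_lt_top hctop (by norm_num)).ne
        (ENNReal.inv_ne_top.mpr hmx0)
    have hkey : ∀ x : ℝ≥0∞, x ≤ mx → l * x < c := by
      intro x hx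
      have h1 : l * x ≤ c / 2 := by
        calc l * x = c / 2 * (mx⁻¹ * x) := by rw [hl, mul_assoc]
          _ ≤ c / 2 * (mx⁻¹ * mx) := by
              exact mul_le_mul_right (mul_le_mul_right hx _) _
          _ = c / 2 := by rw [ENNReal.inv_mul_cancel hmx0 hmxtop, mul_one]
      exact lt_of_le_of_lt h1 (ENNReal.half_lt_self hc0 hctop)
    have hcs : l * s < c := hkey s (le_max_left _ _)
    have hct : l * t < c := hkey t (le_max_right _ _)
    have hub : ∀ (u : Sp) (x : ℝ≥0∞) (hx : 0 < x), 1 ≤ sLevel u →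
        x < (if sLevel u = 1 then sRe u else ∞) → sNode 1 x hx < u := by
      intro u x hx hlev hxB
      rw [sp_lt_iff]
      by_cases h : sLevel u = 1
      · rw [if_pos h] at hxB
        exact Or.inr ⟨h.symm, hxB⟩
      · refine Or.inl ?_; show 1 < sLevel u; omega
    refine key 1 s t hs ht l hl0 hltop ⟨?_, ?_⟩ ⟨?_, ?_⟩
    · rw [sp_lt_iff]; refine Or.inl ?_; show sLevel l1 < 1; omega
    · exact hub u1 _ _ hu1lev (lt_of_lt_of_le hcs ((min_le_left _ _).trans (min_le_left _ _)))
    · rw [sp_lt_iff]; refine Or.inl ?_; show sLevel l2 < 1; omega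
    · exact hub u2 _ _ hu2lev (lt_of_lt_of_le hct ((min_le_left _ _).trans (min_le_right _ _)))
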